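/- Under the Setup, the following three conditions are equivalent. (Assumption 2, Degeneracy) For each support point θ* ∈ S(p,Θ_I) there exist δ, η, M, C > 0 such that, with Θ_I^{−ε} = {θ ∈ Θ_I : d(θ, Θ \ Θ_I) ≥ ε}, for every ε ∈ [0,δ]: max_{1≤j≤J} g_j(θ) ≤ −Cε for all θ ∈ Θ_I^{−ε} ∩ B(θ*,η), and d(θ, Θ_I^{−ε}) ≤ Mε for all θ ∈ Θ_I ∩ B(θ*,η). (Assumption 6) J1 = J and for each support point θ* there exist δ, ε > 0 and a unit vector t with D_j(θ*)·t ≤ −ε for every j with g_j(θ*) ≥ −δ. (No equalities plus MFCQ) J1 = J and for each support point θ* ∈ S(p,Θ_I) there exists t ∈ ℝ^d with D_j(θ*)·t < 0 for every j ∈ J*(θ*). -/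

import Mathlib

open Filter Topology Metric RealInnerProductSpace

noncomputable section

/-- The abstract Setup (Assumption 1) of Kaido–Molinari–Stoye: a compact convex parameter
space `Θ ⊆ ℝ^d` with nonempty interior, `J` continuously differentiable constraint
functions `g j` (inequality constraints for `j < J1`, equality constraints for
`J1 ≤ j`), with (continuous) gradients `D j`, and a direction of projection `p ≠ 0`. -/
structure PISetup (d J J1 : ℕ) where
  Θ : Set (EuclideanSpace ℝ (Fin d))
  g : Fin J → EuclideanSpace ℝ (Fin d) → ℝ
  D : Fin J → EuclideanSpace ℝ (Fin d) → EuclideanSpace ℝ (Fin d)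
  p : EuclideanSpace ℝ (Fin d)
  hd : 1 ≤ d
  hJ : 1 ≤ J
  hJ1 : J1 ≤ J
  compactΘ : IsCompact Θ
  convexΘ : Convex ℝ Θ
  intΘ_nonempty : (interior Θ).Nonempty
  hgrad : ∀ (j : Fin J) (θ : EuclideanSpace ℝ (Fin d)), HasGradientAt (g j) (D j θ) θ
  hgradCont : ∀ j : Fin J, Continuous (D j)
  hp : p ≠ 0

namespace PISetup

variable {d J J1 : ℕ}

/-- The identified set `Θ_I`. -/
def idSet (S : PISetup d J J1) : Set (EuclideanSpace ℝ (Fin d)) :=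
  {θ ∈ S.Θ | ∀ j : Fin J, ((j : ℕ) < J1 → S.g j θ ≤ 0) ∧ (J1 ≤ (j : ℕ) → S.g j θ = 0)}

/-- The support set `S(p, Θ_I)`: the maximizers of `θ ↦ ⟪p, θ⟫` over `Θ_I`. -/
def suppSet (S : PISetup d J J1) : Set (EuclideanSpace ℝ (Fin d)) :=
  {θ ∈ S.idSet | ∀ θ' ∈ S.idSet, ⟪S.p, θ'⟫ ≤ ⟪S.p, θ⟫}

/-- The criterion `Q(θ) = max{0, max_{j< J1} g_j(θ), max_{J1 ≤ j} |g_j(θ)|}`. -/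
def crit (S : PISetup d J J1) (θ : EuclideanSpace ℝ (Fin d)) : ℝ :=
  max 0 (⨆ j : Fin J, if (j : ℕ) < J1 then S.g j θ else |S.g j θ|)

/-- The ball `B(θ*, η) = {θ ∈ Θ : ‖θ - θ*‖ ≤ η}`. -/
def ball (S : PISetup d J J1) (θs : EuclideanSpace ℝ (Fin d)) (η : ℝ) :
    Set (EuclideanSpace ℝ (Fin d)) :=
  {θ ∈ S.Θ | ‖θ - θs‖ ≤ η}

/-- The supporting hyperplane `H(p, Θ_I)`, described relative to a support point `θ*`. -/
def hyper (S : PISetup d J J1) (θs : EuclideanSpace ℝ (Fin d)) :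
    Set (EuclideanSpace ℝ (Fin d)) :=
  {θ ∈ S.Θ | ⟪S.p, θ⟫ = ⟪S.p, θs⟫}

/-- The tangent cone `T(θ*)` to `Θ_I` at `θ*`. -/
def tangentConeAt (S : PISetup d J J1) (θs : EuclideanSpace ℝ (Fin d)) :
    Set (EuclideanSpace ℝ (Fin d)) :=
  insert 0 {t | ∃ u : ℕ → EuclideanSpace ℝ (Fin d),
    (∀ n, u n ∈ S.idSet ∧ u n ≠ θs) ∧ Tendsto u atTop (𝓝 θs) ∧
    Tendsto (fun n => ‖u n - θs‖⁻¹ • (u n - θs)) atTop (𝓝 (‖t‖⁻¹ • t))}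

/-- The linearized cone `L(θ*)`. -/
def linConeAt (S : PISetup d J J1) (θs : EuclideanSpace ℝ (Fin d)) :
    Set (EuclideanSpace ℝ (Fin d)) :=
  {t | (∀ j : Fin J, (j : ℕ) < J1 → S.g j θs = 0 → ⟪S.D j θs, t⟫ ≤ 0) ∧
       (∀ j : Fin J, J1 ≤ (j : ℕ) → ⟪S.D j θs, t⟫ = 0)}

/-- The active set `J*(θ)` of (equality or inequality) constraints. -/
def activeAt (S : PISetup d J J1) (θ : EuclideanSpace ℝ (Fin d)) : Set (Fin J) :=
  {j | ((j : ℕ) < J1 ∧ S.g j θ = 0) ∨ J1 ≤ (j : ℕ)}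

end PISetup

namespace PISetup

variable {d J J1 : ℕ}

/-- The `ε`-shrunk identified set `Θ_I^{-ε} = {θ ∈ Θ_I : d(θ, Θ \ Θ_I) ≥ ε}`. -/
def shrunk (S : PISetup d J J1) (ε : ℝ) : Set (EuclideanSpace ℝ (Fin d)) :=
  {θ ∈ S.idSet | ε ≤ infDist θ (S.Θ \ S.idSet)}

/-- Assumption 2 (Degeneracy), from CHT: for each support point `θ*` there are
`δ, η, M, C > 0` such that for every `ε ∈ [0, δ]`, (i) `max_j g_j(θ) ≤ -Cε` on
`Θ_I^{-ε} ∩ B(θ*, η)`, and (ii) `d(θ, Θ_I^{-ε}) ≤ Mε` on `Θ_I ∩ B(θ*, η)` (the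
distance, taken in `[0,∞]` so that the distance to the empty set is `∞`). -/
def degeneracy (S : PISetup d J J1) : Prop :=
  ∀ θs ∈ S.suppSet, ∃ δ > (0:ℝ), ∃ η > (0:ℝ), ∃ M > (0:ℝ), ∃ C > (0:ℝ),
    ∀ ε ∈ Set.Icc (0:ℝ) δ,
      (∀ θ ∈ S.shrunk ε, ‖θ - θs‖ ≤ η → ∀ j : Fin J, S.g j θ ≤ -C * ε) ∧
      (∀ θ ∈ S.idSet, ‖θ - θs‖ ≤ η →
        EMetric.infEdist θ (S.shrunk ε) ≤ ENNReal.ofReal (M * ε))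

end PISetup


namespace PISetup

variable {d J J1 : ℕ}

lemma mvt_aux (S : PISetup d J J1) (j : Fin J) (a b : EuclideanSpace ℝ (Fin d)) :
    ∃ c ∈ segment ℝ a b, S.g j b - S.g j a = ⟪S.D j c, b - a⟫ := by
  set φ : ℝ → ℝ := fun u => S.g j (a + u • (b - a)) with hφdef
  have hφ : ∀ u : ℝ, HasDerivAt φ (⟪S.D j (a + u • (b - a)), b - a⟫) u := by
    intro u
    have h1 : HasDerivAt (fun u : ℝ => a + u • (b - a)) (b - a) u := by
      simpa using ((hasDerivAt_id u).smul_const (b - a)).const_add a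
    have h2 := (S.hgrad j (a + u • (b - a))).hasFDerivAt.comp_hasDerivAt u h1
    simp [InnerProductSpace.toDual_apply_apply] at h2; exact h2
  obtain ⟨c, hc, hceq⟩ := exists_hasDerivAt_eq_slope φ
    (fun u => ⟪S.D j (a + u • (b - a)), b - a⟫) one_pos
    (fun x _ => (hφ x).continuousAt.continuousWithinAt)
    (fun x _ => hφ x)
  refine ⟨a + c • (b - a), ?_, ?_⟩
  · rw [segment_eq_image']
    exact ⟨c, Set.mem_Icc_of_Ioo hc, rfl⟩
  · have h1 : φ 1 = S.g j b := by simp [hφdef]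
    have h0 : φ 0 = S.g j a := by simp [hφdef]
    rw [hceq]; simp [h1, h0]

lemma gCont (S : PISetup d J J1) (j : Fin J) : Continuous (S.g j) :=
  continuous_iff_continuousAt.2 fun θ => (S.hgrad j θ).hasFDerivAt.continuousAt

lemma D_bound (S : PISetup d J J1) (K : Set (EuclideanSpace ℝ (Fin d))) (hK : IsCompact K) :
    ∃ L : ℝ, 1 ≤ L ∧ ∀ (j : Fin J), ∀ θ ∈ K, ‖S.D j θ‖ ≤ L := by
  have hF : Continuous (fun θ => ∑ j : Fin J, ‖S.D j θ‖) :=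
    continuous_finset_sum _ fun j _ => (S.hgradCont j).norm
  obtain ⟨C, hC⟩ := hK.exists_bound_of_continuousOn hF.continuousOn
  refine ⟨max C 1, le_max_right _ _, fun j θ hθ => ?_⟩
  have h1 : ‖S.D j θ‖ ≤ ∑ i : Fin J, ‖S.D i θ‖ :=
    Finset.single_le_sum (f := fun i => ‖S.D i θ‖) (fun i _ => norm_nonneg _)
      (Finset.mem_univ j)
  have h2 := hC θ hθ
  have h3 : ∑ i : Fin J, ‖S.D i θ‖ ≤ ‖∑ i : Fin J, ‖S.D i θ‖‖ := le_abs_self _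
  exact le_trans (h1.trans (h3.trans h2)) (le_max_left _ _)

lemma idSet_isClosed (S : PISetup d J J1) : IsClosed S.idSet := by
  have : S.idSet = S.Θ ∩ ⋂ j : Fin J,
      ({θ | (j : ℕ) < J1 → S.g j θ ≤ 0} ∩ {θ | J1 ≤ (j : ℕ) → S.g j θ = 0}) := by
    ext θ; simp only [idSet, Set.mem_setOf_eq, Set.mem_inter_iff, Set.mem_iInter,
      Set.mem_sep_iff, forall_and]
  rw [this]
  refine S.compactΘ.isClosed.inter (isClosed_iInter fun j => IsClosed.inter ?_ ?_)
  · by_cases h : (j : ℕ) < J1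
    · simpa [h] using isClosed_le (S.gCont j) continuous_const
    · simp [h]
  · by_cases h : J1 ≤ (j : ℕ)
    · simpa [h] using isClosed_eq (S.gCont j) continuous_const
    · simp [h]

lemma idSet_isCompact (S : PISetup d J J1) : IsCompact S.idSet :=
  S.compactΘ.of_isClosed_subset S.idSet_isClosed (Set.sep_subset _ _)

lemma suppSet_nonempty (S : PISetup d J J1) (hIne : S.idSet.Nonempty) :
    S.suppSet.Nonempty := by
  obtain ⟨θs, hθs, hmax⟩ := S.idSet_isCompact.exists_isMaxOn hIne
    ((continuous_const.inner continuous_id).continuousOn :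
      ContinuousOn (fun θ => ⟪S.p, θ⟫) S.idSet)
  exact ⟨θs, hθs, fun θ' hθ' => hmax hθ'⟩

lemma diff_nonempty (S : PISetup d J J1) (hIint : S.idSet ⊆ interior S.Θ) :
    (S.Θ \ S.idSet).Nonempty := by
  rw [Set.diff_nonempty]
  intro hsub
  have hsub2 : S.Θ ⊆ interior S.Θ := fun θ hθ => hIint (hsub hθ)
  have hopen : IsOpen S.Θ := by
    have hint : interior S.Θ = S.Θ := le_antisymm interior_subset hsub2
    rw [← hint]; exact isOpen_interior
  have hne : S.Θ.Nonempty := ⟨_, interior_subset S.intΘ_nonempty.some_mem⟩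
  have hclopen : IsClopen S.Θ := ⟨S.compactΘ.isClosed, hopen⟩
  have : Nontrivial (EuclideanSpace ℝ (Fin d)) :=
    ⟨⟨EuclideanSpace.single ⟨0, S.hd⟩ (1 : ℝ), 0, by
      intro h
      have := congrArg (fun v : EuclideanSpace ℝ (Fin d) => v ⟨0, S.hd⟩) h
      simp [EuclideanSpace.single_apply] at this⟩⟩
  have huniv : S.Θ = Set.univ := hclopen.eq_univ hne
  exact noncompact_univ _ (huniv ▸ S.compactΘ)


set_option maxHeartbeats 2000000 in
lemma A6_to_deg (S : PISetup d J J1) (hIint : S.idSet ⊆ interior S.Θ)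
    (hJJ : J1 = J)
    (h : ∀ θs ∈ S.suppSet, ∃ δ > (0:ℝ), ∃ ε > (0:ℝ),
        ∃ t : EuclideanSpace ℝ (Fin d), ‖t‖ = 1 ∧
          ∀ j : Fin J, -δ ≤ S.g j θs → ⟪S.D j θs, t⟫ ≤ -ε) :
    S.degeneracy := by
  intro θs hθs
  obtain ⟨δ, hδ, ε, hε, t, ht1, ht⟩ := h θs hθs
  have hne : (S.Θ \ S.idSet).Nonempty := S.diff_nonempty hIint
  have hlt : ∀ j : Fin J, (j : ℕ) < J1 := fun j => hJJ ▸ j.isLt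
  have hgle : ∀ θ ∈ S.idSet, ∀ j, S.g j θ ≤ 0 := fun θ hθ j => (hθ.2 j).1 (hlt j)
  have hmemId : ∀ θ ∈ S.Θ, (∀ j, S.g j θ ≤ 0) → θ ∈ S.idSet := by
    intro θ hθ hg
    exact ⟨hθ, fun j => ⟨fun _ => hg j, fun hj => absurd (hlt j) (by omega)⟩⟩
  classical
  set U : Set (EuclideanSpace ℝ (Fin d)) :=
    interior S.Θ ∩ ⋂ j : Fin J, ({θ | ‖S.D j θ - S.D j θs‖ < ε/2} ∩
      {θ | S.g j θs < -δ → S.g j θ < -δ/2}) with hU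
  have hUopen : IsOpen U := by
    refine isOpen_interior.inter (isOpen_iInter_of_finite fun j => IsOpen.inter ?_ ?_)
    · exact isOpen_lt ((S.hgradCont j).sub continuous_const).norm continuous_const
    · by_cases hb : S.g j θs < -δ
      · simpa [hb] using isOpen_lt (S.gCont j) continuous_const
      · simp [hb]
  have hUmem : θs ∈ U := by
    refine ⟨hIint hθs.1, Set.mem_iInter.2 fun j => ⟨by simpa using half_pos hε,
      fun hb => by linarith⟩⟩
  obtain ⟨ρ, hρ, hball⟩ := Metric.nhds_basis_closedBall.mem_iff.1 (hUopen.mem_nhds hUmem)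
  have hBsub : ∀ θ : EuclideanSpace ℝ (Fin d), ‖θ - θs‖ ≤ ρ → θ ∈ U := by
    intro θ hθ
    exact hball (by simpa [Metric.mem_closedBall, dist_eq_norm] using hθ)
  have hUD : ∀ θ ∈ U, ∀ j : Fin J, ‖S.D j θ - S.D j θs‖ < ε/2 :=
    fun θ hθ j => ((Set.mem_iInter.1 hθ.2) j).1
  have hUg : ∀ θ ∈ U, ∀ j : Fin J, S.g j θs < -δ → S.g j θ < -δ/2 :=
    fun θ hθ j => ((Set.mem_iInter.1 hθ.2) j).2
  have hUΘ : ∀ θ ∈ U, θ ∈ S.Θ := fun θ hθ => interior_subset hθ.1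
  -- key directional derivative bound
  have key : ∀ θ : EuclideanSpace ℝ (Fin d), ‖θ - θs‖ ≤ ρ → ∀ j : Fin J,
      -δ ≤ S.g j θs → ⟪S.D j θ, t⟫ ≤ -(ε/2) := by
    intro θ hθ j hj
    have h1 : ⟪S.D j θ - S.D j θs, t⟫ ≤ ε/2 := by
      calc ⟪S.D j θ - S.D j θs, t⟫ ≤ ‖S.D j θ - S.D j θs‖ * ‖t‖ := real_inner_le_norm _ _
        _ ≤ ε/2 := by rw [ht1, mul_one]; exact le_of_lt (hUD θ (hBsub θ hθ) j)
    have h2 := ht j hj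
    rw [inner_sub_left] at h1
    linarith
  obtain ⟨L, hL1, hLb⟩ := S.D_bound (Metric.closedBall θs ρ) (isCompact_closedBall _ _)
  have hL0 : (0:ℝ) < L := lt_of_lt_of_le one_pos hL1
  have hLmem : ∀ θ : EuclideanSpace ℝ (Fin d), ‖θ - θs‖ ≤ ρ → ∀ j, ‖S.D j θ‖ ≤ L := by
    intro θ hθ j
    exact hLb j θ (by simpa [Metric.mem_closedBall, dist_eq_norm] using hθ)
  refine ⟨min (min (ρ/4) (δ/(2*L))) (min (2*δ/ε) (ρ*ε/(8*L))), by positivity,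
    ρ/4, by positivity, 2*L/ε, by positivity, ε/4, by positivity, ?_⟩
  intro ε' hε'
  obtain ⟨hε'0, hε'δ⟩ := hε'
  have hd1 : ε' ≤ ρ/4 := le_trans hε'δ (le_trans (min_le_left _ _) (min_le_left _ _))
  have hd2 : ε' ≤ δ/(2*L) := le_trans hε'δ (le_trans (min_le_left _ _) (min_le_right _ _))
  have hd3 : ε' ≤ 2*δ/ε := le_trans hε'δ (le_trans (min_le_right _ _) (min_le_left _ _))
  have hd4 : ε' ≤ ρ*ε/(8*L) := le_trans hε'δ (le_trans (min_le_right _ _) (min_le_right _ _))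
  have hLε' : L*ε' ≤ δ/2 := by
    have := mul_le_mul_of_nonneg_left hd2 hL0.le
    calc L*ε' ≤ L*(δ/(2*L)) := this
      _ = δ/2 := by field_simp
  have hMε' : (2*L/ε)*ε' ≤ ρ/4 := by
    have := mul_le_mul_of_nonneg_left hd4 (by positivity : (0:ℝ) ≤ 2*L/ε)
    calc (2*L/ε)*ε' ≤ (2*L/ε)*(ρ*ε/(8*L)) := this
      _ = ρ/4 := by field_simp; ring
  have hCε' : (ε/4)*ε' ≤ δ/2 := by
    have := mul_le_mul_of_nonneg_left hd3 (by positivity : (0:ℝ) ≤ ε/4)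
    calc (ε/4)*ε' ≤ (ε/4)*(2*δ/ε) := this
      _ = δ/2 := by field_simp; ring
  constructor
  · -- part (i)
    intro θ hθ hθη j
    rcases eq_or_lt_of_le hε'0 with h0 | hε'pos
    · rw [← h0, mul_zero]
      exact hgle θ hθ.1 j
    · by_cases hbad : S.g j θs < -δ
      · have h1 : S.g j θ < -δ/2 := hUg θ (hBsub θ (le_trans hθη (by linarith))) j hbad
        nlinarith
      · push_neg at hbad
        by_contra hcon
        push_neg at hcon
        set θ2 := θ - ((3/4)*ε') • t with hθ2
        have hθ2n : ‖θ2 - θs‖ ≤ ρ := by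
          have : θ2 - θs = (θ - θs) - ((3/4)*ε') • t := by rw [hθ2]; abel
          rw [this]
          calc ‖(θ - θs) - ((3/4)*ε') • t‖ ≤ ‖θ - θs‖ + ‖((3/4)*ε') • t‖ := norm_sub_le _ _
            _ ≤ ρ/4 + (3/4)*ε' := by
                rw [norm_smul, ht1, mul_one, Real.norm_eq_abs, abs_of_nonneg (by positivity)]
                linarith
            _ ≤ ρ := by linarith
        obtain ⟨c, hc, hceq⟩ := S.mvt_aux j θ θ2
        have hcn : ‖c - θs‖ ≤ ρ := by
          have hsub : segment ℝ θ θ2 ⊆ Metric.closedBall θs ρ := by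
            apply (convex_closedBall θs ρ).segment_subset
            · simpa [Metric.mem_closedBall, dist_eq_norm] using le_trans hθη (by linarith)
            · simpa [Metric.mem_closedBall, dist_eq_norm] using hθ2n
          simpa [Metric.mem_closedBall, dist_eq_norm] using hsub hc
        have hdc : ⟪S.D j c, t⟫ ≤ -(ε/2) := key c hcn j hbad
        have hval : S.g j θ2 - S.g j θ = -((3/4)*ε') * ⟪S.D j c, t⟫ := by
          rw [hceq, hθ2]
          have : θ - ((3/4)*ε') • t - θ = -(((3/4)*ε') • t) := by abel
          rw [this, inner_neg_right, real_inner_smul_right]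
          ring
        have hpos2 : 0 < S.g j θ2 := by nlinarith
        have hθ2Θ : θ2 ∈ S.Θ := hUΘ θ2 (hBsub θ2 hθ2n)
        have hθ2nid : θ2 ∉ S.idSet := fun hmem => absurd (hgle θ2 hmem j) (by linarith)
        have hinf : infDist θ (S.Θ \ S.idSet) ≤ (3/4)*ε' := by
          have hm2 : θ2 ∈ S.Θ \ S.idSet := ⟨hθ2Θ, hθ2nid⟩
          calc infDist θ (S.Θ \ S.idSet) ≤ dist θ θ2 := infDist_le_dist_of_mem hm2
            _ = (3/4)*ε' := by
                rw [dist_eq_norm, hθ2]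
                have : θ - (θ - ((3/4)*ε') • t) = ((3/4)*ε') • t := by abel
                rw [this, norm_smul, ht1, mul_one, Real.norm_eq_abs,
                  abs_of_nonneg (by positivity)]
        have := hθ.2
        linarith
  · -- part (ii)
    intro θ hθ hθη
    rcases eq_or_lt_of_le hε'0 with h0 | hε'pos
    · rw [← h0, mul_zero, ENNReal.ofReal_zero]
      have hmem : θ ∈ S.shrunk 0 := ⟨hθ, infDist_nonneg⟩
      have h1 := EMetric.infEdist_le_edist_of_mem (x := θ) hmem
      rwa [edist_self] at h1
    · set θ' := θ + ((2*L/ε)*ε') • t with hθ'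
      have hs0 : (0:ℝ) ≤ (2*L/ε)*ε' := by positivity
      have hθ'n : ‖θ' - θs‖ ≤ ρ/2 := by
        have : θ' - θs = (θ - θs) + ((2*L/ε)*ε') • t := by rw [hθ']; abel
        rw [this]
        calc ‖(θ - θs) + ((2*L/ε)*ε') • t‖ ≤ ‖θ - θs‖ + ‖((2*L/ε)*ε') • t‖ := norm_add_le _ _
          _ ≤ ρ/4 + ρ/4 := by
              rw [norm_smul, ht1, mul_one, Real.norm_eq_abs, abs_of_nonneg hs0]
              exact add_le_add hθη hMε'
          _ = ρ/2 := by ring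
      have hsegsub : segment ℝ θ θ' ⊆ Metric.closedBall θs ρ := by
        apply (convex_closedBall θs ρ).segment_subset
        · simpa [Metric.mem_closedBall, dist_eq_norm] using le_trans hθη (by linarith)
        · simpa [Metric.mem_closedBall, dist_eq_norm] using hθ'n.trans (by linarith)
      have hg' : ∀ j : Fin J, S.g j θ' ≤ -(L*ε') := by
        intro j
        by_cases hbad : S.g j θs < -δ
        · have h1 : S.g j θ' < -δ/2 := hUg θ' (hBsub θ' (hθ'n.trans (by linarith))) j hbad
          linarith
        · push_neg at hbad
          obtain ⟨c, hc, hceq⟩ := S.mvt_aux j θ θ'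
          have hcn : ‖c - θs‖ ≤ ρ := by
            simpa [Metric.mem_closedBall, dist_eq_norm] using hsegsub hc
          have hdc : ⟪S.D j c, t⟫ ≤ -(ε/2) := key c hcn j hbad
          have hval : S.g j θ' - S.g j θ = ((2*L/ε)*ε') * ⟪S.D j c, t⟫ := by
            rw [hceq, hθ']
            have : θ + ((2*L/ε)*ε') • t - θ = ((2*L/ε)*ε') • t := by abel
            rw [this, real_inner_smul_right]
          have hgθ : S.g j θ ≤ 0 := hgle θ hθ j
          have hmul : ((2*L/ε)*ε') * ⟪S.D j c, t⟫ ≤ ((2*L/ε)*ε') * (-(ε/2)) :=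
            mul_le_mul_of_nonneg_left hdc hs0
          have heq2 : ((2*L/ε)*ε') * (-(ε/2)) = -(L*ε') := by field_simp
          rw [heq2] at hmul
          linarith
      have hθ'Θ : θ' ∈ S.Θ := hUΘ θ' (hBsub θ' (hθ'n.trans (by linarith)))
      have hθ'id : θ' ∈ S.idSet :=
        hmemId θ' hθ'Θ fun j => (hg' j).trans (by nlinarith)
      have hθ'inf : ε' ≤ infDist θ' (S.Θ \ S.idSet) := by
        by_contra hcon
        push_neg at hcon
        obtain ⟨θ'', hθ''mem, hθ''d⟩ := (infDist_lt_iff hne).1 hcon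
        have hd'' : ‖θ'' - θ'‖ < ε' := by rwa [dist_eq_norm, norm_sub_rev] at hθ''d
        have hθ''n : ‖θ'' - θs‖ ≤ ρ := by
          calc ‖θ'' - θs‖ = ‖(θ'' - θ') + (θ' - θs)‖ := by
                rw [show θ'' - θs = (θ'' - θ') + (θ' - θs) from by abel]
            _ ≤ ‖θ'' - θ'‖ + ‖θ' - θs‖ := norm_add_le _ _
            _ ≤ ρ := by linarith [hd1]
        have hgg : ∀ j : Fin J, S.g j θ'' ≤ 0 := by
          intro j
          obtain ⟨c, hc, hceq⟩ := S.mvt_aux j θ' θ''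
          have hcn : ‖c - θs‖ ≤ ρ := by
            have hsub : segment ℝ θ' θ'' ⊆ Metric.closedBall θs ρ := by
              apply (convex_closedBall θs ρ).segment_subset
              · simpa [Metric.mem_closedBall, dist_eq_norm] using hθ'n.trans (by linarith)
              · simpa [Metric.mem_closedBall, dist_eq_norm] using hθ''n
            simpa [Metric.mem_closedBall, dist_eq_norm] using hsub hc
          have hDc : ‖S.D j c‖ ≤ L := hLmem c hcn j
          have hib : ⟪S.D j c, θ'' - θ'⟫ < L * ε' := by
            calc ⟪S.D j c, θ'' - θ'⟫ ≤ ‖S.D j c‖ * ‖θ'' - θ'‖ := real_inner_le_norm _ _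
              _ < L * ε' := by
                  apply mul_lt_mul' hDc hd'' (norm_nonneg _) hL0
          have h5 := hg' j
          linarith [hceq]
        exact hθ''mem.2 (hmemId θ'' hθ''mem.1 hgg)
      have hθ'shr : θ' ∈ S.shrunk ε' := ⟨hθ'id, hθ'inf⟩
      calc EMetric.infEdist θ (S.shrunk ε') ≤ edist θ θ' :=
            EMetric.infEdist_le_edist_of_mem hθ'shr
        _ = ENNReal.ofReal ((2*L/ε)*ε') := by
            rw [edist_dist, dist_eq_norm]
            congr 1
            have : θ - θ' = -(((2*L/ε)*ε') • t) := by rw [hθ']; abel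
            rw [this, norm_neg, norm_smul, ht1, mul_one, Real.norm_eq_abs, abs_of_nonneg hs0]
        _ ≤ ENNReal.ofReal ((2*L/ε)*ε') := le_refl _



set_option maxHeartbeats 1000000 in
lemma deg_to_J1 (S : PISetup d J J1) (hIne : S.idSet.Nonempty)
    (hdeg : S.degeneracy) : J1 = J := by
  by_contra hne
  have hJ1J : J1 < J := lt_of_le_of_ne S.hJ1 hne
  set j0 : Fin J := ⟨J1, hJ1J⟩ with hj0
  obtain ⟨θs, hθs⟩ := S.suppSet_nonempty hIne
  obtain ⟨δ, hδ, η, hη, M, hM, C, hC, hcl⟩ := hdeg θs hθs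
  set ε' := min δ (η/(M+1)) with hε'
  have hε'pos : 0 < ε' := lt_min hδ (by positivity)
  obtain ⟨h1, h2⟩ := hcl ε' ⟨hε'pos.le, min_le_left _ _⟩
  have h3 := h2 θs hθs.1 (by simp only [sub_self, norm_zero]; positivity)
  have h4 : EMetric.infEdist θs (S.shrunk ε') < ENNReal.ofReal ((M+1)*ε') :=
    lt_of_le_of_lt h3 (by
      rw [ENNReal.ofReal_lt_ofReal_iff (by positivity)]
      nlinarith)
  obtain ⟨θ0, hθ0mem, hθ0d⟩ := EMetric.infEdist_lt_iff.1 h4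
  have hθ0n : ‖θ0 - θs‖ ≤ η := by
    rw [edist_dist, ENNReal.ofReal_lt_ofReal_iff_of_nonneg dist_nonneg] at hθ0d
    rw [← dist_eq_norm, dist_comm]
    have hε'η : (M+1)*ε' ≤ η := by
      have : ε' ≤ η/(M+1) := min_le_right _ _
      calc (M+1)*ε' ≤ (M+1)*(η/(M+1)) := by nlinarith
        _ = η := by field_simp
    linarith
  have h5 := h1 θ0 hθ0mem hθ0n j0
  have h6 : S.g j0 θ0 = 0 := (hθ0mem.1.2 j0).2 (le_refl _)
  nlinarith

set_option maxHeartbeats 2000000 in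
lemma deg_to_A6_pt (S : PISetup d J J1) (hdeg : S.degeneracy)
    (θs : EuclideanSpace ℝ (Fin d)) (hθs : θs ∈ S.suppSet) :
    ∃ δ > (0:ℝ), ∃ ε > (0:ℝ), ∃ t : EuclideanSpace ℝ (Fin d), ‖t‖ = 1 ∧
      ∀ j : Fin J, -δ ≤ S.g j θs → ⟪S.D j θs, t⟫ ≤ -ε := by
  classical
  obtain ⟨δ, hδ, η, hη, M, hM, C, hC, hcl⟩ := hdeg θs hθs
  -- neighborhood where gradients vary little
  set V : Set (EuclideanSpace ℝ (Fin d)) :=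
    ⋂ j : Fin J, {θ | ‖S.D j θ - S.D j θs‖ < C/(8*M)} with hV
  have hVopen : IsOpen V :=
    isOpen_iInter_of_finite fun j =>
      isOpen_lt ((S.hgradCont j).sub continuous_const).norm continuous_const
  have hVmem : θs ∈ V := Set.mem_iInter.2 fun j => by simpa using by positivity
  obtain ⟨ρ, hρ, hball⟩ := Metric.nhds_basis_closedBall.mem_iff.1 (hVopen.mem_nhds hVmem)
  set ε0 := min δ (min (η/(2*M)) (ρ/(2*M))) with hε0
  have hε0pos : 0 < ε0 := lt_min hδ (lt_min (by positivity) (by positivity))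
  have hε0δ : ε0 ≤ δ := min_le_left _ _
  have hε0η : 2*M*ε0 ≤ η := by
    have : ε0 ≤ η/(2*M) := (min_le_right _ _).trans (min_le_left _ _)
    calc 2*M*ε0 ≤ 2*M*(η/(2*M)) := by nlinarith
      _ = η := by field_simp
  have hε0ρ : 2*M*ε0 ≤ ρ := by
    have : ε0 ≤ ρ/(2*M) := (min_le_right _ _).trans (min_le_right _ _)
    calc 2*M*ε0 ≤ 2*M*(ρ/(2*M)) := by nlinarith
      _ = ρ := by field_simp
  obtain ⟨h1, h2⟩ := hcl ε0 ⟨hε0pos.le, hε0δ⟩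
  have h3 := h2 θs hθs.1 (by simp only [sub_self, norm_zero]; positivity)
  have h4 : EMetric.infEdist θs (S.shrunk ε0) < ENNReal.ofReal (2*M*ε0) :=
    lt_of_le_of_lt h3 (by
      rw [ENNReal.ofReal_lt_ofReal_iff (by positivity)]
      nlinarith)
  obtain ⟨θ0, hθ0mem, hθ0d⟩ := EMetric.infEdist_lt_iff.1 h4
  rw [edist_dist, ENNReal.ofReal_lt_ofReal_iff_of_nonneg dist_nonneg] at hθ0d
  have hθ0n : ‖θ0 - θs‖ < 2*M*ε0 := by rw [← dist_eq_norm, dist_comm]; exact hθ0d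
  have hθ0g : ∀ j : Fin J, S.g j θ0 ≤ -C*ε0 := h1 θ0 hθ0mem (hθ0n.le.trans hε0η)
  by_cases hA : ∃ j : Fin J, -(C*ε0/4) ≤ S.g j θs
  · obtain ⟨j0, hj0⟩ := hA
    have hθ0ne : θ0 ≠ θs := by
      intro hcon
      have := hθ0g j0
      rw [hcon] at this
      nlinarith
    have hn0 : 0 < ‖θ0 - θs‖ := by
      rw [norm_pos_iff, sub_ne_zero]; exact hθ0ne
    refine ⟨C*ε0/4, by positivity, C/(4*M), by positivity,
      ‖θ0 - θs‖⁻¹ • (θ0 - θs), ?_, ?_⟩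
    · rw [norm_smul, norm_inv, norm_norm, inv_mul_cancel₀ hn0.ne']
    · intro j hj
      obtain ⟨c, hc, hceq⟩ := S.mvt_aux j θs θ0
      have hcn : c ∈ Metric.closedBall θs ρ := by
        have hsub : segment ℝ θs θ0 ⊆ Metric.closedBall θs ρ :=
          (convex_closedBall θs ρ).segment_subset (Metric.mem_closedBall_self hρ.le)
            (by rw [Metric.mem_closedBall, dist_eq_norm]
                exact hθ0n.le.trans hε0ρ)
        exact hsub hc
      have hcV : ‖S.D j c - S.D j θs‖ < C/(8*M) := Set.mem_iInter.1 (hball hcn) j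
      have hinner1 : ⟪S.D j c, θ0 - θs⟫ ≤ -C*ε0 + C*ε0/4 := by
        rw [← hceq]
        have := hθ0g j
        linarith
      have hinner2 : ⟪S.D j θs - S.D j c, θ0 - θs⟫ ≤ C*ε0/4 := by
        calc ⟪S.D j θs - S.D j c, θ0 - θs⟫ ≤ ‖S.D j θs - S.D j c‖ * ‖θ0 - θs‖ :=
              real_inner_le_norm _ _
          _ ≤ (C/(8*M)) * (2*M*ε0) := by
              apply mul_le_mul _ hθ0n.le (norm_nonneg _) (by positivity)
              rw [norm_sub_rev]; exact hcV.le
          _ = C*ε0/4 := by field_simp; ring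
      have hinner : ⟪S.D j θs, θ0 - θs⟫ ≤ -(C*ε0/2) := by
        rw [inner_sub_left] at hinner2
        linarith
      rw [real_inner_smul_right]
      have hkey : ‖θ0 - θs‖ * (C/(4*M)) ≤ C*ε0/2 := by
        calc ‖θ0 - θs‖ * (C/(4*M)) ≤ (2*M*ε0) * (C/(4*M)) := by
              apply mul_le_mul_of_nonneg_right hθ0n.le (by positivity)
          _ = C*ε0/2 := by field_simp; ring
      rw [inv_mul_le_iff₀ hn0]
      nlinarith
  · push_neg at hA
    refine ⟨C*ε0/4, by positivity, 1, one_pos, ‖S.p‖⁻¹ • S.p, ?_, ?_⟩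
    · rw [norm_smul, norm_inv, norm_norm,
        inv_mul_cancel₀ (norm_ne_zero_iff.2 S.hp)]
    · intro j hj
      exact absurd hj (not_le.2 (by simpa using hA j))



lemma MFCQ_to_A6_pt (S : PISetup d J J1)
    (θs : EuclideanSpace ℝ (Fin d)) (hθs : θs ∈ S.suppSet) (hJJ : J1 = J)
    (t : EuclideanSpace ℝ (Fin d)) (ht : ∀ j : Fin J, S.g j θs = 0 → ⟪S.D j θs, t⟫ < 0) :
    ∃ δ > (0:ℝ), ∃ ε > (0:ℝ), ∃ t' : EuclideanSpace ℝ (Fin d), ‖t'‖ = 1 ∧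
      ∀ j : Fin J, -δ ≤ S.g j θs → ⟪S.D j θs, t'⟫ ≤ -ε := by
  classical
  have hlt : ∀ j : Fin J, (j : ℕ) < J1 := fun j => hJJ ▸ j.isLt
  have hgle : ∀ j : Fin J, S.g j θs ≤ 0 := fun j => (hθs.1.2 j).1 (hlt j)
  set B : Finset (Fin J) := Finset.univ.filter (fun j => S.g j θs ≠ 0) with hB
  set A : Finset (Fin J) := Finset.univ.filter (fun j => S.g j θs = 0) with hA
  set δ0 : ℝ := if hBne : B.Nonempty then B.inf' hBne (fun j => -S.g j θs) else 1 with hδ0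
  have hδ0pos : 0 < δ0 := by
    rw [hδ0]
    split
    · next hBne =>
      rw [Finset.lt_inf'_iff]
      intro j hj
      have : S.g j θs ≠ 0 := (Finset.mem_filter.1 hj).2
      have := hgle j
      have : S.g j θs < 0 := lt_of_le_of_ne ‹S.g j θs ≤ 0› ‹S.g j θs ≠ 0›
      linarith
    · exact one_pos
  have hδ0le : ∀ j : Fin J, S.g j θs ≠ 0 → S.g j θs ≤ -δ0 := by
    intro j hj
    have hBne : B.Nonempty := ⟨j, Finset.mem_filter.2 ⟨Finset.mem_univ _, hj⟩⟩
    rw [hδ0, dif_pos hBne]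
    have := Finset.inf'_le (fun j => -S.g j θs)
      (Finset.mem_filter.2 ⟨Finset.mem_univ _, hj⟩ : j ∈ B)
    linarith
  by_cases hAne : A.Nonempty
  · obtain ⟨j1, hj1⟩ := hAne
    have hj1' : S.g j1 θs = 0 := (Finset.mem_filter.1 hj1).2
    have htne : t ≠ 0 := by
      intro hcon
      have := ht j1 hj1'
      rw [hcon, inner_zero_right] at this
      exact lt_irrefl _ this
    have htn : (0:ℝ) < ‖t‖ := norm_pos_iff.2 htne
    set t' := ‖t‖⁻¹ • t with ht'
    have ht'n : ‖t'‖ = 1 := by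
      rw [ht', norm_smul, norm_inv, norm_norm, inv_mul_cancel₀ htn.ne']
    set ε0 : ℝ := A.inf' ⟨j1, hj1⟩ (fun j => -⟪S.D j θs, t'⟫) with hε0
    have hε0pos : 0 < ε0 := by
      rw [hε0]; refine (Finset.lt_inf'_iff _).2 ?_
      intro j hj
      have hgj : S.g j θs = 0 := (Finset.mem_filter.1 hj).2
      have h1 := ht j hgj
      have : ⟪S.D j θs, t'⟫ = ‖t‖⁻¹ * ⟪S.D j θs, t⟫ := by
        rw [ht', real_inner_smul_right]
      rw [this]
      have : ‖t‖⁻¹ * ⟪S.D j θs, t⟫ < 0 := mul_neg_of_pos_of_neg (by positivity) h1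
      linarith
    refine ⟨δ0/2, by positivity, ε0, hε0pos, t', ht'n, ?_⟩
    intro j hj
    have hgj : S.g j θs = 0 := by
      by_contra hne'
      have := hδ0le j hne'
      linarith
    have hjA : j ∈ A := Finset.mem_filter.2 ⟨Finset.mem_univ _, hgj⟩
    have := Finset.inf'_le (fun j => -⟪S.D j θs, t'⟫) hjA
    rw [← hε0] at this
    linarith
  · refine ⟨δ0/2, by positivity, 1, one_pos, ‖S.p‖⁻¹ • S.p, ?_, ?_⟩
    · rw [norm_smul, norm_inv, norm_norm, inv_mul_cancel₀ (norm_ne_zero_iff.2 S.hp)]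
    · intro j hj
      exfalso
      have hgj : S.g j θs ≠ 0 := by
        intro h0
        exact hAne ⟨j, Finset.mem_filter.2 ⟨Finset.mem_univ _, h0⟩⟩
      have := hδ0le j hgj
      linarith


end PISetup

/-- Theorem 1, claim 1: Assumption 2 (Degeneracy), Assumption 6, and the conjunction of
"no equality constraints" with MFCQ at every support point are all equivalent. -/
theorem degeneracy_iff_assumption6_iff_noeq_MFCQ {d J J1 : ℕ} (S : PISetup d J J1)
    (hIne : S.idSet.Nonempty) (hIint : S.idSet ⊆ interior S.Θ) :
    (S.degeneracy ↔
      (J1 = J ∧ ∀ θs ∈ S.suppSet, ∃ δ > (0:ℝ), ∃ ε > (0:ℝ),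
        ∃ t : EuclideanSpace ℝ (Fin d), ‖t‖ = 1 ∧
          ∀ j : Fin J, -δ ≤ S.g j θs → ⟪S.D j θs, t⟫ ≤ -ε)) ∧
    ((J1 = J ∧ ∀ θs ∈ S.suppSet, ∃ δ > (0:ℝ), ∃ ε > (0:ℝ),
        ∃ t : EuclideanSpace ℝ (Fin d), ‖t‖ = 1 ∧
          ∀ j : Fin J, -δ ≤ S.g j θs → ⟪S.D j θs, t⟫ ≤ -ε) ↔
      (J1 = J ∧ ∀ θs ∈ S.suppSet, ∃ t : EuclideanSpace ℝ (Fin d),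
          ∀ j : Fin J, S.g j θs = 0 → ⟪S.D j θs, t⟫ < 0)) := by
  constructor
  · constructor
    · intro hdeg
      refine ⟨S.deg_to_J1 hIne hdeg, fun θs hθs => S.deg_to_A6_pt hdeg θs hθs⟩
    · rintro ⟨hJJ, h⟩
      exact S.A6_to_deg hIint hJJ h
  · constructor
    · rintro ⟨hJJ, h⟩
      refine ⟨hJJ, fun θs hθs => ?_⟩
      obtain ⟨δ, hδ, ε, hε, t, ht1, ht⟩ := h θs hθs
      exact ⟨t, fun j hj => lt_of_le_of_lt (ht j (by rw [hj]; linarith)) (by linarith)⟩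
    · rintro ⟨hJJ, h⟩
      refine ⟨hJJ, fun θs hθs => ?_⟩
      obtain ⟨t, ht⟩ := h θs hθs
      exact S.MFCQ_to_A6_pt θs hθs hJJ t ht
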